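/- Let E be an elliptic curve over ℚ admitting a rational point of order 4. Then there exist coprime integers s and t with s > 0 such that E is isomorphic over ℚ (via an admissible change of Weierstrass variables) to the Weierstrass curve y² + t·x·y − s·t²·y = x³ − s·t·x²; in particular the discriminant s⁴·t⁷·(16s + t) of this equation is nonzero. -/

import Mathlib

open WeierstrassCurve.Affine WeierstrassCurve.Affine.Point in
theorem exists_normal_form_of_four_torsion (E : WeierstrassCurve ℚ) [E.IsElliptic]
    (hP : ∃ P : E.toAffine.Point, addOrderOf P = 4) :
    ∃ s t : ℤ, IsCoprime s t ∧ 0 < s ∧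
      (∃ C : WeierstrassCurve.VariableChange ℚ,
        (C • E : WeierstrassCurve ℚ) =
          ⟨(t : ℚ), -(s : ℚ) * (t : ℚ), -(s : ℚ) * (t : ℚ) ^ 2, 0, 0⟩) ∧
      (s : ℚ) ^ 4 * (t : ℚ) ^ 7 * (16 * (s : ℚ) + (t : ℚ)) ≠ 0 := by
  obtain ⟨P, hord⟩ := hP
  obtain _ | @⟨x, y, h⟩ := P
  · rw [show (zero : E.toAffine.Point) = 0 from rfl, addOrderOf_zero] at hord
    exact absurd hord (by norm_num)
  -- P has order 4, so P + P ≠ 0, hence y ≠ negY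
  have h4 : (4 : ℕ) • (some _ _ h : E.toAffine.Point) = 0 := hord ▸ addOrderOf_nsmul_eq_zero _
  have hy : y ≠ E.toAffine.negY x y := by
    intro hy
    have h2 : (2 : ℕ) • (some _ _ h : E.toAffine.Point) = 0 := by
      rw [two_smul]; exact add_self_of_Y_eq hy
    have hdvd := addOrderOf_dvd_of_nsmul_eq_zero h2
    rw [hord] at hdvd
    omega
  set l : ℚ := E.toAffine.slope x x y y with hl_def
  have hQadd : (some _ _ h : E.toAffine.Point) + some _ _ h =
      some _ _ (nonsingular_add h h fun hxy => hy hxy.right) := add_self_of_Y_ne hy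
  have hQQ : (some _ _ (nonsingular_add h h fun hxy => hy hxy.right) : E.toAffine.Point) +
      some _ _ (nonsingular_add h h fun hxy => hy hxy.right) = 0 := by
    rw [← two_smul ℕ, ← hQadd, ← two_smul ℕ, ← mul_nsmul']
    exact h4
  have hy2 : E.toAffine.addY x x y l = E.toAffine.negY (E.toAffine.addX x x l)
      (E.toAffine.addY x x y l) := by
    by_contra hne
    rw [add_self_of_Y_ne hne] at hQQ
    exact some_ne_zero _ hQQ
  -- extract algebraic identities
  have heq : y ^ 2 + E.a₁ * x * y + E.a₃ * y = x ^ 3 + E.a₂ * x ^ 2 + E.a₄ * x + E.a₆ :=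
    (E.toAffine.equation_iff x y).mp h.1
  have hd : E.a₃ + E.a₁ * x + 2 * y ≠ 0 := by
    intro hc
    apply hy
    rw [WeierstrassCurve.Affine.negY]
    linarith
  have hd2 : y - E.toAffine.negY x y ≠ 0 := sub_ne_zero.mpr hy
  have hl : l * (E.a₃ + E.a₁ * x + 2 * y) =
      3 * x ^ 2 + 2 * E.a₂ * x + E.a₄ - E.a₁ * y := by
    have hl0 : l * (y - E.toAffine.negY x y) =
        3 * x ^ 2 + 2 * E.a₂ * x + E.a₄ - E.a₁ * y := by
      rw [hl_def, slope_of_Y_ne rfl hy, div_mul_cancel₀ _ hd2]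
    rw [WeierstrassCurve.Affine.negY] at hl0
    linear_combination hl0
  have h3 : 2 * (l * (E.toAffine.addX x x l - x) + y) + E.a₁ * E.toAffine.addX x x l
      + E.a₃ = 0 := by
    simp only [WeierstrassCurve.Affine.addY, WeierstrassCurve.Affine.negAddY,
      WeierstrassCurve.Affine.negY, WeierstrassCurve.Affine.addX] at hy2
    simp only [WeierstrassCurve.Affine.addX]
    linear_combination -hy2
  set A1 : ℚ := E.a₁ + 2 * l with hA1_def
  set A2 : ℚ := E.a₂ - l * E.a₁ + 3 * x - l ^ 2 with hA2_def
  have hA12 : A1 * A2 = E.a₃ + E.a₁ * x + 2 * y := by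
    rw [WeierstrassCurve.Affine.addX] at h3
    rw [hA1_def, hA2_def]
    linear_combination -h3
  have hA1 : A1 ≠ 0 := left_ne_zero_of_mul (hA12 ▸ hd)
  have hA2 : A2 ≠ 0 := right_ne_zero_of_mul (hA12 ▸ hd)
  set ρ : ℚ := -A2 / A1 ^ 2 with hρ_def
  have hρ : ρ ≠ 0 := div_ne_zero (neg_ne_zero.mpr hA2) (pow_ne_zero 2 hA1)
  have hnum : ρ.num ≠ 0 := Rat.num_ne_zero.mpr hρ
  have hcop : IsCoprime ρ.num (ρ.den : ℤ) :=
    Int.isCoprime_iff_gcd_eq_one.mpr ρ.reduced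
  have hdenpos : (0 : ℤ) < ρ.den := Int.natCast_pos.mpr ρ.pos
  have hden : ((ρ.den : ℤ) : ℚ) ≠ 0 := by
    exact_mod_cast hdenpos.ne'
  have hmul : (ρ.num : ℚ) = ρ * ((ρ.den : ℤ) : ℚ) := by
    push_cast
    exact (div_eq_iff (by exact_mod_cast hden)).mp (Rat.num_div_den ρ)
  obtain ⟨s, t, hst, hs, ht0, hrel⟩ : ∃ s t : ℤ, IsCoprime s t ∧ 0 < s ∧
      (t : ℚ) ≠ 0 ∧ (s : ℚ) = ρ * t := by
    rcases hnum.lt_or_gt with hn | hn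
    · refine ⟨-ρ.num, -(ρ.den : ℤ), hcop.neg_left.neg_right, by omega, ?_, ?_⟩
      · push_cast; simp only [ne_eq, neg_eq_zero]; exact_mod_cast hden
      · push_cast at hmul ⊢; rw [mul_neg, ← hmul]
    · refine ⟨ρ.num, (ρ.den : ℤ), hcop, hn, ?_, ?_⟩
      · exact hden
      · exact hmul
  -- the key relation between s, t, A1, A2
  have hst2 : (s : ℚ) * A1 ^ 2 = -A2 * t := by
    rw [hrel, hρ_def]
    field_simp
  have hu : A1 / (t : ℚ) ≠ 0 := div_ne_zero hA1 ht0
  have hcurve : ((⟨Units.mk0 _ hu, x, l, y⟩ : WeierstrassCurve.VariableChange ℚ) • E) =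
      ⟨(t : ℚ), -(s : ℚ) * (t : ℚ), -(s : ℚ) * (t : ℚ) ^ 2, 0, 0⟩ := by
    ext
    · show (Units.mk0 _ hu : ℚˣ)⁻¹.val * (E.a₁ + 2 * l) = t
      simp only [Units.val_inv_eq_inv_val, Units.val_mk0, inv_div]
      rw [← hA1_def]
      exact div_mul_cancel₀ _ hA1
    · show (Units.mk0 _ hu : ℚˣ)⁻¹.val ^ 2 * (E.a₂ - l * E.a₁ + 3 * x - l ^ 2) =
        -(s : ℚ) * t
      simp only [Units.val_inv_eq_inv_val, Units.val_mk0, inv_div, div_pow]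
      rw [← hA2_def, div_mul_eq_mul_div, div_eq_iff (pow_ne_zero 2 hA1)]
      linear_combination (t:ℚ) * hst2
    · show (Units.mk0 _ hu : ℚˣ)⁻¹.val ^ 3 * (E.a₃ + x * E.a₁ + 2 * y) =
        -(s : ℚ) * t ^ 2
      simp only [Units.val_inv_eq_inv_val, Units.val_mk0, inv_div, div_pow]
      have h' : E.a₃ + x * E.a₁ + 2 * y = A1 * A2 := by rw [hA12]; ring
      rw [h', div_mul_eq_mul_div, div_eq_iff (pow_ne_zero 3 hA1)]
      linear_combination (t:ℚ) ^ 2 * A1 * hst2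
    · show (Units.mk0 _ hu : ℚˣ)⁻¹.val ^ 4 * (E.a₄ - l * E.a₃ + 2 * x * E.a₂ -
        (y + x * l) * E.a₁ + 3 * x ^ 2 - 2 * l * y) = 0
      simp only [Units.val_inv_eq_inv_val, Units.val_mk0]
      apply mul_eq_zero_of_right
      linear_combination -hl
    · show (Units.mk0 _ hu : ℚˣ)⁻¹.val ^ 6 * (E.a₆ + x * E.a₄ + x ^ 2 * E.a₂ + x ^ 3 -
        y * E.a₃ - y ^ 2 - x * y * E.a₁) = 0
      simp only [Units.val_inv_eq_inv_val, Units.val_mk0]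
      apply mul_eq_zero_of_right
      linear_combination -heq
  refine ⟨s, t, hst, hs, ⟨_, hcurve⟩, ?_⟩
  have h0 : (((⟨Units.mk0 _ hu, x, l, y⟩ : WeierstrassCurve.VariableChange ℚ) • E)).Δ ≠ 0 :=
    (WeierstrassCurve.isUnit_Δ _).ne_zero
  rw [hcurve] at h0
  have hΔ : (⟨(t : ℚ), -(s : ℚ) * (t : ℚ), -(s : ℚ) * (t : ℚ) ^ 2, 0, 0⟩ :
      WeierstrassCurve ℚ).Δ = (s : ℚ) ^ 4 * (t : ℚ) ^ 7 * (16 * (s : ℚ) + (t : ℚ)) := by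
    simp only [WeierstrassCurve.Δ, WeierstrassCurve.b₂, WeierstrassCurve.b₄,
      WeierstrassCurve.b₆, WeierstrassCurve.b₈]
    ring
  rwa [hΔ] at h0
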